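/- arXiv:2403.06777 — 3 statements merged into one kernel-verified Lean document; each statement's English description precedes it below -/
import Mathlib

section
/- For every real number Ψ and every real number Φ with Φ ∈ {0, π}, the complex identity e^{iΨΦ/π} = (1/2)·(1 + e^{iΨ} + e^{iΦ} − e^{i(Ψ+Φ)}) holds. (This is the paper's Lemma reducing 'π-pair' subterms to 'phase-pair' subterms with constant C = 1/2.) -/
open Complex Real

/-- π-pair subterms reduce to phase-pair subterms with constant C = 1/2:
for Φ ∈ {0, π}, e^{iΨΦ/π} = (1/2)(1 + e^{iΨ} + e^{iΦ} − e^{i(Ψ+Φ)}). -/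
theorem pi_pair_eq_phase_pair (Ψ Φ : ℝ) (hΦ : Φ = 0 ∨ Φ = Real.pi) :
    Complex.exp (Complex.I * ((Ψ * Φ / Real.pi : ℝ) : ℂ)) =
      (1 / 2) * (1 + Complex.exp (Complex.I * (Ψ : ℂ)) + Complex.exp (Complex.I * (Φ : ℂ))
        - Complex.exp (Complex.I * ((Ψ + Φ : ℝ) : ℂ))) := by
  rcases hΦ with h | h <;> subst h
  · simp; ring
  · have hpi : Ψ * Real.pi / Real.pi = Ψ := by
      field_simp
    rw [hpi]
    have h1 : Complex.exp (Complex.I * (Real.pi : ℂ)) = -1 := by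
      rw [mul_comm]; exact Complex.exp_pi_mul_I
    have h2 : Complex.exp (Complex.I * ((Ψ + Real.pi : ℝ) : ℂ)) =
        -Complex.exp (Complex.I * (Ψ : ℂ)) := by
      push_cast
      rw [mul_add, Complex.exp_add, mul_comm Complex.I (Real.pi : ℂ),
        Complex.exp_pi_mul_I]
      ring
    rw [h1, h2]; ring
end

section
/- For every real number Ψ with Ψ ∈ {π/2, 3π/2}, the complex identity e^{iΨ/2} = (e^{iπ/4}/2)·(1 + e^{i(π/2 − Ψ)} + e^{iπ/2} − e^{i(π − Ψ)}) holds. (This is the paper's Lemma reducing 'half-π' subterms e^{iΨ/2}, which arise from parameterised local complementation with Image(Ψ) ⊆ {π/2, 3π/2}, to 'phase-pair' subterms with the change of variable Ψ' = −Ψ + π/2.) -/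
open Complex Real

/-- Half-π subterms reduce to phase-pair subterms: for Ψ ∈ {π/2, 3π/2},
e^{iΨ/2} = (e^{iπ/4}/2)(1 + e^{i(π/2 − Ψ)} + e^{iπ/2} − e^{i(π − Ψ)}). -/
theorem half_pi_eq_phase_pair (Ψ : ℝ) (hΨ : Ψ = Real.pi / 2 ∨ Ψ = 3 * Real.pi / 2) :
    Complex.exp (Complex.I * ((Ψ / 2 : ℝ) : ℂ)) =
      (Complex.exp (Complex.I * ((Real.pi / 4 : ℝ) : ℂ)) / 2) *
        (1 + Complex.exp (Complex.I * ((Real.pi / 2 - Ψ : ℝ) : ℂ))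
          + Complex.exp (Complex.I * ((Real.pi / 2 : ℝ) : ℂ))
          - Complex.exp (Complex.I * ((Real.pi - Ψ : ℝ) : ℂ))) := by
  have hI : Complex.exp (Complex.I * ((Real.pi / 2 : ℝ) : ℂ)) = Complex.I := by
    rw [mul_comm, Complex.exp_mul_I]; simp
  have hPi : Complex.exp (Complex.I * ((Real.pi : ℝ) : ℂ)) = -1 := by
    rw [mul_comm, Complex.exp_pi_mul_I]
  rcases hΨ with h | h <;> subst h
  · rw [show ((Real.pi/2/2 : ℝ) : ℂ) = ((Real.pi/4 : ℝ) : ℂ) by push_cast; ring,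
      show ((Real.pi/2 - Real.pi/2 : ℝ) : ℂ) = (0 : ℂ) by push_cast; ring,
      show ((Real.pi - Real.pi/2 : ℝ) : ℂ) = ((Real.pi/2 : ℝ) : ℂ) by push_cast; ring,
      hI, mul_zero, Complex.exp_zero]
    ring
  · rw [show Complex.I * ((3*Real.pi/2/2 : ℝ) : ℂ)
        = Complex.I * ((Real.pi/4 : ℝ) : ℂ) + Complex.I * ((Real.pi/2 : ℝ) : ℂ) by push_cast; ring,
      Complex.exp_add, hI,
      show Complex.I * ((Real.pi/2 - 3*Real.pi/2 : ℝ) : ℂ)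
        = -(Complex.I * ((Real.pi : ℝ) : ℂ)) by push_cast; ring,
      show Complex.I * ((Real.pi - 3*Real.pi/2 : ℝ) : ℂ)
        = -(Complex.I * ((Real.pi/2 : ℝ) : ℂ)) by push_cast; ring,
      Complex.exp_neg, Complex.exp_neg, hI, hPi]
    simp [Complex.inv_I]
    ring
end

section
/- Let a : ℕ → ℂ and n : ℕ, and define G : ℕ → ℕ → ℂ recursively by G 0 i = (if i < n then a i else 0), and G (k+1) i = (if 2^{k+1} divides i then G k i + G k (i + 2^k) else G k i). Then for every k and every index i divisible by 2^k, G k i = Σ_{j=0}^{2^k − 1} G 0 (i + j); in particular, for any k with 2^k ≥ n, G k 0 = Σ_{j=0}^{n−1} a j. (This is the correctness of the paper's GPU-parallelised summation algorithm, which computes the sum of an n-element array in ⌈log₂ n⌉ parallel combination rounds.) -/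
open Finset

/-- Correctness of the GPU-parallelised summation algorithm: if G 0 holds the
(zero-padded) array and each round adds into every 2^{k+1}-aligned position i
the partial sum at position i + 2^k, then after k rounds every 2^k-aligned
position i holds the block sum Σ_{j<2^k} G 0 (i+j); in particular, once
2^k ≥ n, position 0 holds the total sum Σ_{j<n} a j. -/
theorem gpu_parallel_sum_correct (a : ℕ → ℂ) (n : ℕ) (G : ℕ → ℕ → ℂ)
    (h0 : ∀ i, G 0 i = if i < n then a i else 0)
    (hstep : ∀ k i, G (k + 1) i =
      if 2 ^ (k + 1) ∣ i then G k i + G k (i + 2 ^ k) else G k i) :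
    (∀ k i, 2 ^ k ∣ i → G k i = ∑ j ∈ Finset.range (2 ^ k), G 0 (i + j)) ∧
    (∀ k, n ≤ 2 ^ k → G k 0 = ∑ j ∈ Finset.range n, a j) := by
  have main : ∀ k i, 2 ^ k ∣ i → G k i = ∑ j ∈ Finset.range (2 ^ k), G 0 (i + j) := by
    intro k
    induction k with
    | zero => intro i _; simp
    | succ k ih =>
      intro i hdvd
      rw [hstep, if_pos hdvd]
      have h1 : 2 ^ k ∣ i := dvd_trans (pow_dvd_pow 2 (Nat.le_succ k)) hdvd
      have h2 : 2 ^ k ∣ i + 2 ^ k := Dvd.dvd.add h1 dvd_rfl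
      rw [ih i h1, ih _ h2]
      rw [pow_succ, mul_two, Finset.sum_range_add]
      congr 1
      apply Finset.sum_congr rfl
      intro j _
      ring_nf
  refine ⟨main, fun k hk => ?_⟩
  rw [main k 0 (dvd_zero _)]
  rw [← Finset.sum_range_add_sum_Ico _ hk]
  have hz : ∑ j ∈ Finset.Ico n (2 ^ k), G 0 (0 + j) = 0 :=
    Finset.sum_eq_zero fun j hj => by
      rw [zero_add, h0, if_neg (not_lt.mpr (Finset.mem_Ico.mp hj).1)]
  rw [hz, add_zero]
  exact Finset.sum_congr rfl fun j hj =>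
    by rw [zero_add, h0, if_pos (Finset.mem_range.mp hj)]
end
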